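/- For n > 0, the modified Bernoulli number satisfies B*_n - 1/n = sum_{k=1}^{n} C(n+k-1, n-k) * B_k/(2k). -/

import Mathlib

open Finset

/-- The modified Bernoulli numbers of Zagier. -/
noncomputable def zagierBstar (n : ℕ) : ℚ :=
  ∑ r ∈ Finset.range (n + 1), ((n + r).choose (2 * r) : ℚ) * bernoulli r / (n + r)

theorem zagierBstar_sub (n : ℕ) (hn : 0 < n) :
    zagierBstar n - 1 / n =
      ∑ k ∈ Finset.Icc 1 n, ((n + k - 1).choose (n - k) : ℚ) * bernoulli k / (2 * k) := by
  have hsplit : Finset.range (n + 1) = insert 0 (Finset.Icc 1 n) := by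
    ext x; simp [Finset.mem_range, Finset.mem_Icc]; omega
  unfold zagierBstar
  rw [hsplit, Finset.sum_insert (by simp)]
  simp only [Nat.mul_zero, Nat.add_zero, Nat.choose_zero_right, bernoulli_zero,
    Nat.cast_one, Nat.cast_zero, add_zero, one_mul]
  rw [add_sub_cancel_left]
  apply Finset.sum_congr rfl
  intro k hk
  rw [Finset.mem_Icc] at hk
  obtain ⟨hk1, hkn⟩ := hk
  -- choose symmetry: C(n+k-1, n-k) = C(n+k-1, 2k-1)
  have hsym : (n + k - 1).choose (n - k) = (n + k - 1).choose (2 * k - 1) := by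
    have h := Nat.choose_symm (n := n + k - 1) (k := 2 * k - 1) (by omega)
    have : n + k - 1 - (2 * k - 1) = n - k := by omega
    rw [this] at h
    exact h
  -- key: (n+k) * C(n+k-1, 2k-1) = C(n+k, 2k) * (2k)
  have hkey : (n + k) * (n + k - 1).choose (2 * k - 1) = (n + k).choose (2 * k) * (2 * k) := by
    have h := Nat.add_one_mul_choose_eq (n + k - 1) (2 * k - 1)
    have e1 : n + k - 1 + 1 = n + k := by omega
    have e2 : (2 * k - 1) + 1 = 2 * k := by omega
    rw [e1, e2] at h
    exact h
  rw [hsym]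
  have hne1 : ((n : ℚ) + k) ≠ 0 := by positivity
  have hne2 : (2 * (k : ℚ)) ≠ 0 := by positivity
  have hcast : ((n + k : ℕ) : ℚ) * ((n + k - 1).choose (2 * k - 1) : ℚ)
      = ((n + k).choose (2 * k) : ℚ) * ((2 * k : ℕ) : ℚ) := by
    exact_mod_cast congrArg (Nat.cast (R := ℚ)) hkey
  push_cast at hcast
  field_simp
  linear_combination (-(bernoulli k)) * hcast
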